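/- arXiv:1909.07313 — 3 statements merged into one kernel-verified Lean document; each statement's English description precedes it below -/
import Mathlib

section
/- Fix n ≥ 2, distinct goods i, j ∈ {1,…,n}, a value vector b ∈ ℤ^n with b ≥ 0, and integers λ_i, λ_j, λ with 1 ≤ λ_i ≤ b_i − 1, 1 ≤ λ_j ≤ b_j − 1 and λ ≥ 1. Then the bid list consisting of the negative bid (b, −1) together with the three positive bids (b − λ_i·e^i, +1), (b − λ_j·e^j, +1) and (b + λ·1, +1) is valid; that is, its indirect utility function is convex on ℝ^n. Here e^i, e^j are standard basis vectors and 1 is the all-ones vector. -/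
open Finset

noncomputable section

variable {n : ℕ}

/-- Extend a value/price vector in `ℝ^n` by a 0-th coordinate (the reject good) equal to 0. -/
def extVec (b : Fin n → ℝ) : Fin (n + 1) → ℝ := Fin.cons 0 b

/-- Surplus of good `i` (in `{0,…,n}`) for value vector `b` at price `p`. -/
def surplus (b p : Fin n → ℝ) (i : Fin (n + 1)) : ℝ := extVec b i - extVec p i

/-- Maximal surplus over all goods (including the reject good). -/
def maxSurplus (b p : Fin n → ℝ) : ℝ :=
  Finset.univ.sup' Finset.univ_nonempty (surplus b p)

/-- The bid with value vector `b` demands good `i` at price `p`. -/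
def Demands (b p : Fin n → ℝ) (i : Fin (n + 1)) : Prop :=
  ∀ j, surplus b p j ≤ surplus b p i

open Classical in
/-- The set of goods demanded by value vector `b` at price `p`. -/
def demandedSet (b p : Fin n → ℝ) : Finset (Fin (n + 1)) :=
  Finset.univ.filter fun i => Demands b p i

/-- Indirect utility function of a bid list (bids are pairs of value vector and weight). -/
def indirectUtility (B : List ((Fin n → ℝ) × ℝ)) (p : Fin n → ℝ) : ℝ :=
  (B.map fun bw => bw.2 * maxSurplus bw.1 p).sum

/-- Surplus gap of the bid `b` at `p`: maximal surplus minus the best surplus on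
a non-demanded good (junk value when every good is demanded). -/
def surplusGap (b p : Fin n → ℝ) : ℝ :=
  maxSurplus b p - sSup (surplus b p '' {i | i ∉ demandedSet b p})

/-- `B` is `ε`-valid at `p` if its indirect utility function is convex on the open
`L∞`-ball of radius `ε` around `p`. -/
def epsValid (B : List ((Fin n → ℝ) × ℝ)) (p : Fin n → ℝ) (ε : ℝ) : Prop :=
  ConvexOn ℝ {q : Fin n → ℝ | ‖q - p‖ < ε} (indirectUtility B)

open Classical in
/-- Sum of the weights of bids in `B` that are marginal on both `i` and `i'` at `p`. -/
def marginalWeight (B : List ((Fin n → ℝ) × ℝ)) (p : Fin n → ℝ) (i i' : Fin (n + 1)) : ℝ :=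
  (B.map fun bw => if Demands bw.1 p i ∧ Demands bw.1 p i' then bw.2 else 0).sum

/-! ### Auxiliary lemmas for Statement 17 -/

/-- Pointwise max of two convex functions is convex. -/
lemma convexOn_max_aux17 {f g : (Fin n → ℝ) → ℝ} (hf : ConvexOn ℝ Set.univ f)
    (hg : ConvexOn ℝ Set.univ g) : ConvexOn ℝ Set.univ (fun p => max (f p) (g p)) := by
  simpa [Pi.sup_def] using hf.sup hg

/-- `p ↦ c - p k` is convex (affine). -/
lemma convexOn_affine_aux17 (c : ℝ) (k : Fin n) :
    ConvexOn ℝ Set.univ (fun p : Fin n → ℝ => c - p k) := by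
  refine ⟨convex_univ, fun x _ y _ a b ha hb hab => le_of_eq ?_⟩
  simp only [Pi.add_apply, Pi.smul_apply, smul_eq_mul]
  ring_nf
  linear_combination (-(c : ℝ)) * hab

/-- The sup of the affine functions `p ↦ c k - p k` is convex. -/
lemma convexOn_sup'_affine_aux17 {n : ℕ} [NeZero n] (c : Fin n → ℝ) :
    ConvexOn ℝ Set.univ (fun p : Fin n → ℝ =>
      (univ : Finset (Fin n)).sup' univ_nonempty (fun k => c k - p k)) := by
  classical
  have H : ∀ (s : Finset (Fin n)) (hs : s.Nonempty),
      ConvexOn ℝ Set.univ (fun p : Fin n → ℝ => s.sup' hs (fun k => c k - p k)) := by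
    intro s hs
    induction hs using Finset.Nonempty.cons_induction with
    | singleton a => simpa using convexOn_affine_aux17 (c a) a
    | cons a s ha hs ih =>
        have e : (fun p : Fin n → ℝ => (Finset.cons a s ha).sup' (Finset.cons_nonempty ha)
            fun k => c k - p k)
            = fun p => max (c a - p a) (s.sup' hs fun k => c k - p k) := by
          funext p; rw [Finset.sup'_cons hs]
        rw [e]
        exact convexOn_max_aux17 (convexOn_affine_aux17 (c a) a) ih
  exact H univ univ_nonempty

lemma sup'_cons_univ_aux17 {n : ℕ} [NeZero n] (x : ℝ) (g : Fin n → ℝ) :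
    (univ : Finset (Fin (n+1))).sup' univ_nonempty (Fin.cons x g)
      = max x ((univ : Finset (Fin n)).sup' univ_nonempty g) := by
  apply le_antisymm
  · refine Finset.sup'_le _ _ fun i _ => ?_
    cases i using Fin.cases with
    | zero => simp
    | succ k => simp only [Fin.cons_succ]; exact le_max_of_le_right (Finset.le_sup' g (mem_univ k))
  · refine max_le ?_ ?_
    · simpa only [Fin.cons_zero] using Finset.le_sup' (Fin.cons x g) (mem_univ (0 : Fin (n+1)))
    · refine Finset.sup'_le _ _ fun k _ => ?_
      simpa only [Fin.cons_succ] using Finset.le_sup' (Fin.cons x g) (mem_univ k.succ)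

/-- The maximal surplus is the positive part of the best surplus over real goods. -/
lemma maxSurplus_eq_aux17 {n : ℕ} [NeZero n] (b p : Fin n → ℝ) :
    maxSurplus b p
      = max 0 ((univ : Finset (Fin n)).sup' univ_nonempty fun k => b k - p k) := by
  have e : surplus b p = Fin.cons 0 (fun k => b k - p k) := by
    funext i
    cases i using Fin.cases with
    | zero => simp [surplus, extVec]
    | succ k => simp [surplus, extVec]
  rw [maxSurplus, e]
  exact sup'_cons_univ_aux17 0 _

lemma sup'_add_const_aux17 {n : ℕ} [NeZero n] (g : Fin n → ℝ) (c : ℝ) :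
    ((univ : Finset (Fin n)).sup' univ_nonempty fun k => g k + c)
      = ((univ : Finset (Fin n)).sup' univ_nonempty g) + c := by
  apply le_antisymm
  · exact Finset.sup'_le _ _ fun k _ => add_le_add (Finset.le_sup' g (mem_univ k)) (le_refl c)
  · have : (univ : Finset (Fin n)).sup' univ_nonempty g
        ≤ ((univ : Finset (Fin n)).sup' univ_nonempty fun k => g k + c) - c :=
      Finset.sup'_le _ _ fun k _ =>
        le_sub_iff_add_le.mpr (Finset.le_sup' (fun k => g k + c) (mem_univ k))
    linarith

/-- The key real-number identity behind Statement 17. -/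
lemma key_real_aux17 (x y z l : ℝ) (h1 : y ≤ x) (h2 : z ≤ x) (h3 : x ≤ max y z) (hl : 0 ≤ l) :
    max 0 y + max 0 z + max 0 (x + l) - max 0 x
      = max (max 0 (y + l)) (max (z + l) (y + z + l)) := by
  rcases le_max_iff.mp h3 with h | h
  · have hxy : y = x := le_antisymm h1 h
    subst hxy
    simp only [max_def]
    split_ifs <;> linarith
  · have hxz : z = x := le_antisymm h2 h
    subst hxz
    simp only [max_def]
    split_ifs <;> linarith

/-- For `n ≥ 2`, distinct goods `i ≠ j`, an integral value vector
`b ≥ 0` and integers `λ_i, λ_j, λ` with `1 ≤ λ_i ≤ b_i − 1`, `1 ≤ λ_j ≤ b_j − 1` and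
`λ ≥ 1`, the bid list consisting of the negative bid `(b, −1)` and the three positive bids
`(b − λ_i·e^i, +1)`, `(b − λ_j·e^j, +1)`, `(b + λ·1, +1)` is valid: its indirect utility
function is convex on `ℝ^n`. -/
theorem stmt17 (n : ℕ) (hn : 2 ≤ n) (i j : Fin n) (hij : i ≠ j)
    (b : Fin n → ℤ) (hb : ∀ k, 0 ≤ b k)
    (li lj lam : ℤ) (hli : 1 ≤ li) (hli' : li ≤ b i - 1)
    (hlj : 1 ≤ lj) (hlj' : lj ≤ b j - 1) (hlam : 1 ≤ lam) :
    ConvexOn ℝ Set.univ (indirectUtility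
      [((fun k => (b k : ℝ)), -1),
       ((fun k => (b k : ℝ) - if k = i then (li : ℝ) else 0), 1),
       ((fun k => (b k : ℝ) - if k = j then (lj : ℝ) else 0), 1),
       ((fun k => (b k : ℝ) + (lam : ℝ)), 1)]) := by
  classical
  haveI : NeZero n := ⟨by omega⟩
  have hli0 : (0 : ℝ) ≤ (li : ℝ) := by exact_mod_cast (by linarith : (0:ℤ) ≤ li)
  have hlj0 : (0 : ℝ) ≤ (lj : ℝ) := by exact_mod_cast (by linarith : (0:ℤ) ≤ lj)
  have hlam0 : (0 : ℝ) ≤ (lam : ℝ) := by exact_mod_cast (by linarith : (0:ℤ) ≤ lam)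
  set Ai : (Fin n → ℝ) → ℝ := fun p => (univ : Finset (Fin n)).sup' univ_nonempty
      (fun k => ((b k : ℝ) - if k = i then (li : ℝ) else 0) - p k) with hAidef
  set Aj : (Fin n → ℝ) → ℝ := fun p => (univ : Finset (Fin n)).sup' univ_nonempty
      (fun k => ((b k : ℝ) - if k = j then (lj : ℝ) else 0) - p k) with hAjdef
  have hAi : ConvexOn ℝ Set.univ Ai := convexOn_sup'_affine_aux17 _
  have hAj : ConvexOn ℝ Set.univ Aj := convexOn_sup'_affine_aux17 _
  have key : (indirectUtility
      [((fun k => (b k : ℝ)), -1),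
       ((fun k => (b k : ℝ) - if k = i then (li : ℝ) else 0), 1),
       ((fun k => (b k : ℝ) - if k = j then (lj : ℝ) else 0), 1),
       ((fun k => (b k : ℝ) + (lam : ℝ)), 1)])
      = fun p => max (max 0 (Ai p + (lam : ℝ)))
          (max (Aj p + (lam : ℝ)) (Ai p + Aj p + (lam : ℝ))) := by
    funext p
    set x : ℝ := (univ : Finset (Fin n)).sup' univ_nonempty
        (fun k => (b k : ℝ) - p k) with hxdef
    have hx : maxSurplus (fun k => (b k : ℝ)) p = max 0 x := maxSurplus_eq_aux17 _ _
    have hxi : maxSurplus (fun k => (b k : ℝ) - if k = i then (li : ℝ) else 0) p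
        = max 0 (Ai p) := maxSurplus_eq_aux17 _ _
    have hxj : maxSurplus (fun k => (b k : ℝ) - if k = j then (lj : ℝ) else 0) p
        = max 0 (Aj p) := maxSurplus_eq_aux17 _ _
    have hxl : maxSurplus (fun k => (b k : ℝ) + (lam : ℝ)) p = max 0 (x + (lam : ℝ)) := by
      rw [maxSurplus_eq_aux17]
      congr 1
      have e : (fun k => ((b k : ℝ) + (lam : ℝ)) - p k)
          = fun k => ((b k : ℝ) - p k) + (lam : ℝ) := by funext k; ring
      rw [e, sup'_add_const_aux17]
    have h1 : Ai p ≤ x := Finset.sup'_mono_fun fun k _ => by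
      by_cases hk : k = i <;> simp [hk] <;> linarith
    have h2 : Aj p ≤ x := Finset.sup'_mono_fun fun k _ => by
      by_cases hk : k = j <;> simp [hk] <;> linarith
    have h3 : x ≤ max (Ai p) (Aj p) := by
      refine Finset.sup'_le _ _ fun k _ => ?_
      by_cases hk : k = i
      · subst hk
        refine le_max_of_le_right ?_
        have hkj : ¬ (k = j) := hij
        have : (b k : ℝ) - p k ≤ ((b k : ℝ) - if k = j then (lj : ℝ) else 0) - p k := by
          simp [hkj]
        refine this.trans ?_
        simp only [hAjdef]
        exact Finset.le_sup' (fun k => ((b k : ℝ) - if k = j then (lj : ℝ) else 0) - p k)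
          (mem_univ k)
      · refine le_max_of_le_left ?_
        have : (b k : ℝ) - p k ≤ ((b k : ℝ) - if k = i then (li : ℝ) else 0) - p k := by
          simp [hk]
        refine this.trans ?_
        simp only [hAidef]
        exact Finset.le_sup' (fun k => ((b k : ℝ) - if k = i then (li : ℝ) else 0) - p k)
          (mem_univ k)
    have hk := key_real_aux17 x (Ai p) (Aj p) (lam : ℝ) h1 h2 h3 hlam0
    simp only [indirectUtility, List.map_cons, List.map_nil, List.sum_cons, List.sum_nil,
      hx, hxi, hxj, hxl]
    linarith
  rw [key]
  exact convexOn_max_aux17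
    (convexOn_max_aux17 (convexOn_const _ convex_univ) (hAi.add_const _))
    (convexOn_max_aux17 (hAj.add_const _) ((hAi.add hAj).add_const _))

end
end

section
/- Let B be a finite list of bids on n goods whose indirect utility function f_B is convex on ℝ^n, let t ∈ ℤ^n, and define g(p) := f_B(p) + t·p and, for p ∈ ℤ^n and S ⊆ {1,…,n}, the slope g'(p; S) := g(p + e^S) − g(p), where e^S is the 0/1 indicator vector of S. Let p ∈ ℤ^n and suppose S_0 ⊆ {1,…,n} is a minimiser of S ↦ g'(p; S) that is contained in every minimiser of this map. Let λ ≥ 1 be an integer with g'(p + (λ−1)·e^{S_0}; S_0) = g'(p; S_0). Then S_0 is a minimiser of S ↦ g'(p + (λ−1)·e^{S_0}; S) and is contained in every minimiser of that map; that is, S_0 is also the inclusion-wise minimal steepest descent direction at p + (λ−1)·e^{S_0}. -/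
open Finset

noncomputable section

variable {n : ℕ}

/-- The Lyapunov function `g(p) = f_B(p) + t·p` evaluated at an integer price vector. -/
def lyapunov (B : List ((Fin n → ℝ) × ℝ)) (t : Fin n → ℤ) (p : Fin n → ℤ) : ℝ :=
  indirectUtility B (fun i => (p i : ℝ)) + ∑ i, (t i : ℝ) * (p i : ℝ)

/-- The descSlope `g'(p; S) = g(p + e^S) − g(p)` of the Lyapunov function at an integer price
vector `p` in direction `e^S`. -/
def descSlope (B : List ((Fin n → ℝ) × ℝ)) (t : Fin n → ℤ) (p : Fin n → ℤ)
    (S : Finset (Fin n)) : ℝ :=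
  lyapunov B t (fun i => p i + if i ∈ S then 1 else 0) - lyapunov B t p

namespace St18

lemma four_point {f : ℝ → ℝ} {s : Set ℝ} (hf : ConvexOn ℝ s f) {a η δ : ℝ}
    (hη : 0 ≤ η) (hδ : 0 ≤ δ) (ha : a ∈ s) (hb : a + η + δ ∈ s) :
    f (a + η) + f (a + δ) ≤ f a + f (a + η + δ) := by
  rcases eq_or_lt_of_le (by positivity : (0:ℝ) ≤ η + δ) with h0 | hpos
  · have hη0 : η = 0 := by linarith
    have hδ0 : δ = 0 := by linarith
    simp [hη0, hδ0]
  · have hne : η + δ ≠ 0 := ne_of_gt hpos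
    set μ : ℝ := η / (η + δ) with hμdef
    have hμ0 : 0 ≤ μ := by positivity
    have hμ1 : μ ≤ 1 := by
      rw [hμdef, div_le_one hpos]; linarith
    have e1 : (1 - μ) • a + μ • (a + η + δ) = a + η := by
      simp only [smul_eq_mul, hμdef]
      field_simp
      ring
    have e2 : μ • a + (1 - μ) • (a + η + δ) = a + δ := by
      simp only [smul_eq_mul, hμdef]
      field_simp
      ring
    have h1 := hf.2 ha hb (by linarith : (0:ℝ) ≤ 1 - μ) hμ0 (by ring)
    have h2 := hf.2 ha hb hμ0 (by linarith : (0:ℝ) ≤ 1 - μ) (by ring)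
    rw [e1] at h1
    rw [e2] at h2
    simp only [smul_eq_mul] at h1 h2
    linarith

lemma inc_of_windows {Y : ℝ → ℝ} {w : ℝ} (hw : 0 < w)
    (hY : ∀ c : ℝ, ConvexOn ℝ (Set.Icc c (c + w)) Y) :
    ∀ a η δ : ℝ, 0 ≤ η → 0 ≤ δ → Y (a + δ) - Y a ≤ Y (a + η + δ) - Y (a + η) := by
  have stepA : ∀ a η δ : ℝ, 0 ≤ η → 0 ≤ δ → η + δ ≤ w →
      Y (a + δ) - Y a ≤ Y (a + η + δ) - Y (a + η) := by
    intro a η δ hη hδ hsum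
    have h := four_point (hY a) hη hδ (Set.mem_Icc.2 ⟨le_refl a, by linarith⟩)
      (Set.mem_Icc.2 ⟨by linarith, by linarith⟩)
    linarith
  have stepB : ∀ nn : ℕ, ∀ a η δ : ℝ, 0 ≤ η → η ≤ nn * (w/2) → 0 ≤ δ → δ ≤ w/2 →
      Y (a + δ) - Y a ≤ Y (a + η + δ) - Y (a + η) := by
    intro nn
    induction nn with
    | zero =>
      intro a η δ hη hηn hδ hδw
      have hη0 : η = 0 := le_antisymm (by simpa using hηn) hη
      subst hη0
      simp
    | succ m ih =>
      intro a η δ hη hηn hδ hδw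
      by_cases hc : η ≤ m * (w/2)
      · exact ih a η δ hη hc hδ hδw
      · push_neg at hc
        by_cases hc2 : η ≤ w/2
        · exact stepA a η δ hη hδ (by linarith)
        · push_neg at hc2
          push_cast at hηn
          have h1 := ih a (η - w/2) δ (by linarith) (by linarith) hδ hδw
          have h2 := stepA (a + (η - w/2)) (w/2) δ (by linarith) hδ (by linarith)
          rw [show a + (η - w/2) + (w/2) + δ = a + η + δ from by ring,
            show a + (η - w/2) + (w/2) = a + η from by ring] at h2
          linarith
  have stepB' : ∀ a η δ : ℝ, 0 ≤ η → 0 ≤ δ → δ ≤ w/2 →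
      Y (a + δ) - Y a ≤ Y (a + η + δ) - Y (a + η) := by
    intro a η δ hη hδ hδw
    obtain ⟨m, hm⟩ := exists_nat_ge (η / (w/2))
    have hm' : η ≤ m * (w/2) := by
      rw [div_le_iff₀ (by linarith)] at hm; linarith
    exact stepB m a η δ hη hm' hδ hδw
  have stepC : ∀ mm : ℕ, ∀ a η δ : ℝ, 0 ≤ η → 0 ≤ δ → δ ≤ mm * (w/2) →
      Y (a + δ) - Y a ≤ Y (a + η + δ) - Y (a + η) := by
    intro mm
    induction mm with
    | zero =>
      intro a η δ hη hδ hδm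
      have hδ0 : δ = 0 := le_antisymm (by simpa using hδm) hδ
      subst hδ0
      simp
    | succ m ih =>
      intro a η δ hη hδ hδm
      by_cases hc : δ ≤ m * (w/2)
      · exact ih a η δ hη hδ hc
      · push_neg at hc
        by_cases hc2 : δ ≤ w/2
        · exact stepB' a η δ hη hδ hc2
        · push_neg at hc2
          push_cast at hδm
          have h1 := ih a η (δ - w/2) hη (by linarith) (by linarith)
          have h2 := stepB' (a + (δ - w/2)) η (w/2) hη (by linarith) (le_refl _)
          rw [show a + (δ - w/2) + (w/2) = a + δ from by ring,
            show a + (δ - w/2) + η + (w/2) = a + η + δ from by ring,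
            show a + (δ - w/2) + η = a + η + (δ - w/2) from by ring] at h2
          linarith
  intro a η δ hη hδ
  obtain ⟨m, hm⟩ := exists_nat_ge (δ / (w/2))
  have hm' : δ ≤ m * (w/2) := by
    rw [div_le_iff₀ (by linarith)] at hm; linarith
  exact stepC m a η δ hη hδ hm'


lemma chain_mono (R : Finset ℝ) (Ψ : ℝ → ℝ)
    (h : ∀ a b : ℝ, a ≤ b → (∀ ρ ∈ R, ρ ≤ a ∨ b ≤ ρ) → Ψ a ≤ Ψ b) :
    ∀ a b : ℝ, a ≤ b → Ψ a ≤ Ψ b := by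
  classical
  have aux : ∀ k : ℕ, ∀ a b : ℝ, a ≤ b →
      (R.filter (fun ρ => a < ρ ∧ ρ < b)).card ≤ k → Ψ a ≤ Ψ b := by
    intro k
    induction k with
    | zero =>
      intro a b hab hcard
      apply h a b hab
      intro ρ hρ
      by_contra hcon
      push_neg at hcon
      have : ρ ∈ R.filter (fun ρ => a < ρ ∧ ρ < b) := by
        simp only [Finset.mem_filter]
        exact ⟨hρ, hcon.1, hcon.2⟩
      have := Finset.card_pos.2 ⟨ρ, this⟩
      omega
    | succ k ih =>
      intro a b hab hcard
      by_cases hemp : (R.filter (fun ρ => a < ρ ∧ ρ < b)).Nonempty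
      · obtain ⟨ρ₀, hρ₀⟩ := hemp
        simp only [Finset.mem_filter] at hρ₀
        obtain ⟨hρ₀R, hρ₀a, hρ₀b⟩ := hρ₀
        have hmem : ρ₀ ∈ R.filter (fun ρ => a < ρ ∧ ρ < b) := by
          simp only [Finset.mem_filter]; exact ⟨hρ₀R, hρ₀a, hρ₀b⟩
        have hsub1 : R.filter (fun ρ => a < ρ ∧ ρ < ρ₀) ⊆
            (R.filter (fun ρ => a < ρ ∧ ρ < b)).erase ρ₀ := by
          intro ρ hρ
          simp only [Finset.mem_filter] at hρ
          simp only [Finset.mem_erase, Finset.mem_filter]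
          exact ⟨ne_of_lt hρ.2.2, hρ.1, hρ.2.1, lt_trans hρ.2.2 hρ₀b⟩
        have hsub2 : R.filter (fun ρ => ρ₀ < ρ ∧ ρ < b) ⊆
            (R.filter (fun ρ => a < ρ ∧ ρ < b)).erase ρ₀ := by
          intro ρ hρ
          simp only [Finset.mem_filter] at hρ
          simp only [Finset.mem_erase, Finset.mem_filter]
          exact ⟨(ne_of_lt hρ.2.1).symm, hρ.1, lt_trans hρ₀a hρ.2.1, hρ.2.2⟩
        have hcard' : ((R.filter (fun ρ => a < ρ ∧ ρ < b)).erase ρ₀).card ≤ k := by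
          have := Finset.card_erase_of_mem hmem
          omega
        have h1 := ih a ρ₀ (le_of_lt hρ₀a) (le_trans (Finset.card_le_card hsub1) hcard')
        have h2 := ih ρ₀ b (le_of_lt hρ₀b) (le_trans (Finset.card_le_card hsub2) hcard')
        linarith
      · apply h a b hab
        intro ρ hρ
        by_contra hcon
        push_neg at hcon
        exact hemp ⟨ρ, by
          simp only [Finset.mem_filter]
          exact ⟨hρ, hcon.1, hcon.2⟩⟩
  intro a b hab
  exact aux (R.filter (fun ρ => a < ρ ∧ ρ < b)).card a b hab (le_refl _)

lemma convexOn_congr {s : Set ℝ} {f g : ℝ → ℝ} (hf : ConvexOn ℝ s f)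
    (h : ∀ x ∈ s, f x = g x) : ConvexOn ℝ s g := by
  refine ⟨hf.1, fun x hx y hy a b ha hb hab => ?_⟩
  rw [← h _ hx, ← h _ hy, ← h _ (hf.1 hx hy ha hb hab)]
  exact hf.2 hx hy ha hb hab

lemma convexOn_line {n : ℕ} {f : (Fin n → ℝ) → ℝ} (hf : ConvexOn ℝ Set.univ f)
    (base dir : Fin n → ℝ) :
    ConvexOn ℝ Set.univ (fun θ : ℝ => f (base + θ • dir)) := by
  refine ⟨convex_univ, fun x _ y _ a b ha hb hab => ?_⟩
  have e : base + (a • x + b • y) • dir =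
      a • (base + x • dir) + b • (base + y • dir) := by
    funext i
    simp only [Pi.add_apply, Pi.smul_apply, smul_eq_mul]
    linear_combination (-(base i)) * hab
  show f (base + (a • x + b • y) • dir) ≤ a • f (base + x • dir) + b • f (base + y • dir)
  rw [e]
  exact hf.2 (Set.mem_univ _) (Set.mem_univ _) ha hb hab



/-- indicator vector of a finset -/
def chi (S : Finset (Fin n)) : Fin n → ℝ := fun i => if i ∈ S then 1 else 0

/-- extended indicator on `Fin (n+1)` -/
def ind (S : Finset (Fin n)) : Fin (n + 1) → ℝ := extVec (chi S)

/-- support of the extended indicator -/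
def supp (S : Finset (Fin n)) : Finset (Fin (n + 1)) :=
  Finset.univ.filter fun j => ind S j = 1

def beta (x b : Fin n → ℝ) : Fin (n + 1) → ℝ := fun j => extVec b j - extVec x j

lemma ind_zero (S : Finset (Fin n)) : ind S 0 = 0 := by
  simp [ind, extVec]

lemma ind_succ (S : Finset (Fin n)) (i : Fin n) :
    ind S i.succ = if i ∈ S then 1 else 0 := by
  simp [ind, extVec, chi]

lemma ind_eq_or (S : Finset (Fin n)) (j : Fin (n + 1)) : ind S j = 0 ∨ ind S j = 1 := by
  induction j using Fin.cases with
  | zero => left; exact ind_zero S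
  | succ i =>
    rw [ind_succ]
    by_cases h : i ∈ S <;> simp [h]

lemma mem_supp {S : Finset (Fin n)} {j : Fin (n + 1)} : j ∈ supp S ↔ ind S j = 1 := by
  simp [supp]

lemma ind_disjoint {S T : Finset (Fin n)} (h : Disjoint S T) (j : Fin (n + 1)) :
    ind S j = 0 ∨ ind T j = 0 := by
  induction j using Fin.cases with
  | zero => left; exact ind_zero S
  | succ i =>
    rw [ind_succ, ind_succ]
    by_cases hS : i ∈ S
    · right
      have : i ∉ T := fun hT => (Finset.disjoint_left.1 h) hS hT
      simp [this]
    · left; simp [hS]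

lemma extVec_comb (x u v : Fin n → ℝ) (s σ : ℝ) (j : Fin (n + 1)) :
    extVec (x + s • u + σ • v) j = extVec x j + s * extVec u j + σ * extVec v j := by
  induction j using Fin.cases with
  | zero => simp [extVec]
  | succ i => simp [extVec, smul_eq_mul]

/-- max surplus of bid value `b` at `x + s•chi (U\V) + σ•chi V`, as explicit sup'. -/
def bigM (x : Fin n → ℝ) (U V : Finset (Fin n)) (b : Fin n → ℝ) (s σ : ℝ) : ℝ :=
  Finset.univ.sup' Finset.univ_nonempty fun j : Fin (n + 1) =>
    beta x b j - s * ind (U \ V) j - σ * ind V j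

lemma maxSurplus_eq_bigM (x : Fin n → ℝ) (U V : Finset (Fin n)) (b : Fin n → ℝ) (s σ : ℝ) :
    maxSurplus b (x + s • chi (U \ V) + σ • chi V) = bigM x U V b s σ := by
  unfold maxSurplus bigM
  apply Finset.sup'_congr _ rfl
  intro j _
  unfold surplus beta
  rw [extVec_comb]
  show extVec b j - (extVec x j + s * ind (U \ V) j + σ * ind V j) = _
  ring


lemma disjUV (U V : Finset (Fin n)) : Disjoint (U \ V) V := Finset.sdiff_disjoint

lemma indA_zero {U V : Finset (Fin n)} {j : Fin (n + 1)} (h : ind V j = 1) :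
    ind (U \ V) j = 0 := by
  rcases ind_disjoint (disjUV U V) j with h' | h'
  · exact h'
  · rw [h] at h'; norm_num at h'

lemma indC_zero {U V : Finset (Fin n)} {j : Fin (n + 1)} (h : ind (U \ V) j = 1) :
    ind V j = 0 := by
  rcases ind_disjoint (disjUV U V) j with h' | h'
  · rw [h] at h'; norm_num at h'
  · exact h'

lemma bigM_eq_s (x : Fin n → ℝ) (U V : Finset (Fin n)) (b : Fin n → ℝ) {s σ r₁ : ℝ}
    (hσ : s + r₁ ≤ σ)
    (hty : ¬(supp V).Nonempty ∨
      ∃ _ : (supp (U \ V)).Nonempty, ∀ hP : (supp V).Nonempty, ∀ hQ : (supp (U \ V)).Nonempty,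
        (supp V).sup' hP (beta x b) ≤ (supp (U \ V)).sup' hQ (beta x b) + r₁) :
    bigM x U V b s σ = bigM x U V b s (s + r₁) := by
  apply le_antisymm
  · apply Finset.sup'_le
    intro j _
    rcases ind_eq_or V j with hC | hC
    · have h := Finset.le_sup' (fun j : Fin (n + 1) =>
        beta x b j - s * ind (U \ V) j - (s + r₁) * ind V j) (Finset.mem_univ j)
      rw [hC] at h ⊢
      simp only [mul_zero, sub_zero] at h ⊢; exact h
    · have h := Finset.le_sup' (fun j : Fin (n + 1) =>
        beta x b j - s * ind (U \ V) j - (s + r₁) * ind V j) (Finset.mem_univ j)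
      rw [hC] at h ⊢
      simp only [mul_one] at h ⊢
      have : beta x b j - s * ind (U \ V) j - σ ≤
          beta x b j - s * ind (U \ V) j - (s + r₁) := by linarith
      exact le_trans this h
  · apply Finset.sup'_le
    intro j _
    rcases ind_eq_or V j with hC | hC
    · have h := Finset.le_sup' (fun j : Fin (n + 1) =>
        beta x b j - s * ind (U \ V) j - σ * ind V j) (Finset.mem_univ j)
      rw [hC] at h ⊢
      simp only [mul_zero, sub_zero] at h ⊢; exact h
    · have hP : (supp V).Nonempty := ⟨j, mem_supp.2 hC⟩
      rcases hty with h0 | ⟨hQ, hle⟩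
      · exact absurd hP h0
      have hA0 : ind (U \ V) j = 0 := indA_zero hC
      have h1 : beta x b j ≤ (supp V).sup' hP (beta x b) :=
        Finset.le_sup' _ (mem_supp.2 hC)
      obtain ⟨j₀, hj₀mem, hj₀⟩ := Finset.exists_mem_eq_sup' hQ (beta x b)
      have hj₀Q : ind (U \ V) j₀ = 1 := mem_supp.1 hj₀mem
      have hj₀C : ind V j₀ = 0 := indC_zero hj₀Q
      have h2 := Finset.le_sup' (fun j : Fin (n + 1) =>
        beta x b j - s * ind (U \ V) j - σ * ind V j) (Finset.mem_univ j₀)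
      rw [hj₀Q, hj₀C] at h2
      simp only [mul_one, mul_zero, sub_zero] at h2
      have h3 := hle hP hQ
      rw [hj₀] at h3
      rw [hC, hA0]
      simp only [mul_one, mul_zero, sub_zero]
      show beta x b j - (s + r₁) ≤ bigM x U V b s σ
      calc beta x b j - (s + r₁) ≤ beta x b j₀ - s := by linarith
        _ ≤ bigM x U V b s σ := h2

lemma bigM_eq_sigma (x : Fin n → ℝ) (U V : Finset (Fin n)) (b : Fin n → ℝ) {s σ r₂ : ℝ}
    (hs : σ ≤ s + r₂)
    (hty : ∃ hP : (supp V).Nonempty, ∀ hQ : (supp (U \ V)).Nonempty,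
        (supp (U \ V)).sup' hQ (beta x b) + r₂ ≤ (supp V).sup' hP (beta x b)) :
    bigM x U V b s σ = bigM x U V b (σ - r₂) σ := by
  apply le_antisymm
  · apply Finset.sup'_le
    intro j _
    rcases ind_eq_or (U \ V) j with hA | hA
    · have h := Finset.le_sup' (fun j : Fin (n + 1) =>
        beta x b j - (σ - r₂) * ind (U \ V) j - σ * ind V j) (Finset.mem_univ j)
      rw [hA] at h ⊢
      simp only [mul_zero, sub_zero] at h ⊢; exact h
    · have h := Finset.le_sup' (fun j : Fin (n + 1) =>
        beta x b j - (σ - r₂) * ind (U \ V) j - σ * ind V j) (Finset.mem_univ j)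
      rw [hA] at h ⊢
      simp only [mul_one] at h ⊢
      have : beta x b j - s - σ * ind V j ≤
          beta x b j - (σ - r₂) - σ * ind V j := by linarith
      exact le_trans this h
  · apply Finset.sup'_le
    intro j _
    rcases ind_eq_or (U \ V) j with hA | hA
    · have h := Finset.le_sup' (fun j : Fin (n + 1) =>
        beta x b j - s * ind (U \ V) j - σ * ind V j) (Finset.mem_univ j)
      rw [hA] at h ⊢
      simp only [mul_zero, sub_zero] at h ⊢; exact h
    · have hQ : (supp (U \ V)).Nonempty := ⟨j, mem_supp.2 hA⟩
      obtain ⟨hP, hle⟩ := hty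
      have hC0 : ind V j = 0 := indC_zero hA
      have h1 : beta x b j ≤ (supp (U \ V)).sup' hQ (beta x b) :=
        Finset.le_sup' _ (mem_supp.2 hA)
      obtain ⟨j₁, hj₁mem, hj₁⟩ := Finset.exists_mem_eq_sup' hP (beta x b)
      have hj₁P : ind V j₁ = 1 := mem_supp.1 hj₁mem
      have hj₁A : ind (U \ V) j₁ = 0 := indA_zero hj₁P
      have h2 := Finset.le_sup' (fun j : Fin (n + 1) =>
        beta x b j - s * ind (U \ V) j - σ * ind V j) (Finset.mem_univ j₁)
      rw [hj₁P, hj₁A] at h2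
      simp only [mul_one, mul_zero, sub_zero] at h2
      have h3 := hle hQ
      rw [hj₁] at h3
      rw [hA, hC0]
      simp only [mul_one, mul_zero, sub_zero]
      show beta x b j - (σ - r₂) ≤ bigM x U V b s σ
      calc beta x b j - (σ - r₂) ≤ beta x b j₁ - σ := by linarith
        _ ≤ bigM x U V b s σ := h2

lemma list_sum_split {α : Type*} (l : List α) (f g h : α → ℝ)
    (H : ∀ y ∈ l, f y = g y + h y) :
    (l.map f).sum = (l.map g).sum + (l.map h).sum := by
  induction l with
  | nil => simp
  | cons y l ih =>
    simp only [List.map_cons, List.sum_cons]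
    rw [H y List.mem_cons_self, ih (fun z hz => H z (List.mem_cons_of_mem _ hz))]
    ring

lemma key (B : List ((Fin n → ℝ) × ℝ)) (hconv : ConvexOn ℝ Set.univ (indirectUtility B))
    (x : Fin n → ℝ) (U V : Finset (Fin n)) (hVU : V ⊆ U) :
    indirectUtility B (x + chi U) + indirectUtility B (x + chi V) ≤
      indirectUtility B (x + chi U + chi V) + indirectUtility B x := by
  classical
  set f := indirectUtility B with hf
  set Φ : ℝ → ℝ → ℝ := fun s σ => f (x + s • chi (U \ V) + σ • chi V) with hΦ
  have hpt : ∀ s σ : ℝ, Φ s σ = (B.map fun bw => bw.2 * bigM x U V bw.1 s σ).sum := by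
    intro s σ
    show indirectUtility B _ = _
    unfold indirectUtility
    congr 1
    apply List.map_congr_left
    intro bw _
    rw [maxSurplus_eq_bigM]
  set tie : ((Fin n → ℝ) × ℝ) → ℝ := fun bw =>
    if hP : (supp V).Nonempty then
      if hQ : (supp (U \ V)).Nonempty then
        (supp V).sup' hP (beta x bw.1) - (supp (U \ V)).sup' hQ (beta x bw.1)
      else 0
    else 0 with htie
  set R : Finset ℝ := (B.map tie).toFinset with hR
  set H : ℝ → ℝ := fun r => Φ 1 (1 + r) - Φ 0 r with hH
  have key2 : H 0 ≤ H 1 := by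
    apply chain_mono R H ?_ 0 1 zero_le_one
    intro r₁ r₂ hr12 hgap
    rcases eq_or_lt_of_le hr12 with rfl | hlt
    · exact le_refl _
    have hwpos : (0:ℝ) < r₂ - r₁ := by linarith
    set tS : ((Fin n → ℝ) × ℝ) → Prop := fun bw =>
      ¬(supp V).Nonempty ∨ ((supp (U \ V)).Nonempty ∧ tie bw ≤ r₁) with htS
    set Xf : ℝ → ℝ := fun s =>
      (B.map fun bw => if tS bw then bw.2 * bigM x U V bw.1 s (s + r₁) else 0).sum with hXf
    set Yf : ℝ → ℝ := fun σ =>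
      (B.map fun bw => if tS bw then 0 else bw.2 * bigM x U V bw.1 (σ - r₂) σ).sum with hYf
    have dec : ∀ s σ : ℝ, s + r₁ ≤ σ → σ ≤ s + r₂ → Φ s σ = Xf s + Yf σ := by
      intro s σ h1 h2
      rw [hpt]
      apply list_sum_split
      intro bw hbw
      by_cases ht : tS bw
      · rw [if_pos ht, if_pos ht, add_zero]
        congr 1
        apply bigM_eq_s x U V bw.1 h1
        rw [htS] at ht
        rcases ht with h0 | ⟨hQ, hle⟩
        · exact Or.inl h0
        · refine Or.inr ⟨hQ, fun hP hQ' => ?_⟩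
          rw [htie] at hle
          simp only [dif_pos hP, dif_pos hQ'] at hle
          linarith
      · rw [if_neg ht, if_neg ht, zero_add]
        congr 1
        have hP : (supp V).Nonempty := by
          by_contra hc
          exact ht (Or.inl hc)
        apply bigM_eq_sigma x U V bw.1 h2
        refine ⟨hP, fun hQ => ?_⟩
        have hmem : tie bw ∈ R := by
          rw [hR]
          exact List.mem_toFinset.2 (List.mem_map_of_mem (f := tie) hbw)
        rcases hgap (tie bw) hmem with hle | hge
        · exact absurd (Or.inr ⟨hQ, hle⟩) ht
        · rw [htie] at hge
          simp only [dif_pos hP, dif_pos hQ] at hge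
          linarith
    have hY : ∀ cc : ℝ, ConvexOn ℝ (Set.Icc cc (cc + (r₂ - r₁))) Yf := by
      intro cc
      have hline : ConvexOn ℝ Set.univ
          (fun σ : ℝ => f (x + (cc - r₁) • chi (U \ V) + σ • chi V)) :=
        convexOn_line hconv (x + (cc - r₁) • chi (U \ V)) (chi V)
      have hsub : ConvexOn ℝ (Set.Icc cc (cc + (r₂ - r₁)))
          (fun σ : ℝ => Φ (cc - r₁) σ - Xf (cc - r₁)) := by
        have h1 : ConvexOn ℝ Set.univ
            (fun σ : ℝ => f (x + (cc - r₁) • chi (U \ V) + σ • chi V) + -(Xf (cc - r₁))) :=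
          hline.add_const _
        have h2 := h1.subset (Set.subset_univ (Set.Icc cc (cc + (r₂ - r₁))))
          (convex_Icc cc (cc + (r₂ - r₁)))
        apply convexOn_congr h2
        intro σ _
        show f _ + -(Xf (cc - r₁)) = Φ (cc - r₁) σ - Xf (cc - r₁)
        rw [hΦ]
        ring
      apply convexOn_congr hsub
      intro σ hσ
      obtain ⟨hσ1, hσ2⟩ := Set.mem_Icc.1 hσ
      have e1 : (cc - r₁) + r₁ ≤ σ := by linarith
      have e2 : σ ≤ (cc - r₁) + r₂ := by linarith
      rw [dec (cc - r₁) σ e1 e2]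
      ring
    have hinc := inc_of_windows hwpos hY r₁ 1 (r₂ - r₁) zero_le_one (le_of_lt hwpos)
    rw [show r₁ + (r₂ - r₁) = r₂ from by ring,
      show r₁ + 1 + (r₂ - r₁) = 1 + r₂ from by ring,
      show r₁ + 1 = 1 + r₁ from by ring] at hinc
    show Φ 1 (1 + r₁) - Φ 0 r₁ ≤ Φ 1 (1 + r₂) - Φ 0 r₂
    have d1 := dec 1 (1 + r₁) (by linarith) (by linarith)
    have d2 := dec 1 (1 + r₂) (by linarith) (by linarith)
    have d3 := dec 0 r₁ (by linarith) (by linarith)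
    have d4 := dec 0 r₂ (by linarith) (by linarith)
    rw [d1, d2, d3, d4]
    linarith
  have hpt1 : x + chi U + chi V = x + (1:ℝ) • chi (U \ V) + (2:ℝ) • chi V := by
    funext i
    simp only [Pi.add_apply, Pi.smul_apply, smul_eq_mul, chi, Finset.mem_sdiff]
    by_cases hV : i ∈ V
    · have hU : i ∈ U := hVU hV
      simp [hV, hU]
      all_goals ring
    · by_cases hU : i ∈ U <;> simp [hV, hU]
  have hpt2 : x + chi U = x + (1:ℝ) • chi (U \ V) + (1:ℝ) • chi V := by
    funext i
    simp only [Pi.add_apply, Pi.smul_apply, smul_eq_mul, chi, Finset.mem_sdiff]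
    by_cases hV : i ∈ V
    · have hU : i ∈ U := hVU hV
      simp [hV, hU]
    · by_cases hU : i ∈ U <;> simp [hV, hU]
  have hpt3 : x + chi V = x + (0:ℝ) • chi (U \ V) + (1:ℝ) • chi V := by
    funext i
    simp [chi]
  have hpt4 : x = x + (0:ℝ) • chi (U \ V) + (0:ℝ) • chi V := by
    funext i
    simp [chi]
  rw [hH] at key2
  simp only [add_zero] at key2
  have e11 : (1:ℝ) + 1 = 2 := by norm_num
  rw [e11] at key2
  have g1 : f (x + chi U + chi V) = Φ 1 2 := by rw [hpt1]
  have g2 : f (x + chi U) = Φ 1 1 := by rw [hpt2]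
  have g3 : f (x + chi V) = Φ 0 1 := by rw [hpt3]
  have g4 : f x = Φ 0 0 := by rw [hpt4]
  show f (x + chi U) + f (x + chi V) ≤ f (x + chi U + chi V) + f x
  rw [g1, g2, g3, g4]
  linarith

lemma castpt (z : Fin n → ℤ) (S : Finset (Fin n)) :
    (fun i => ((z i + if i ∈ S then 1 else 0 : ℤ) : ℝ)) =
      (fun i => (z i : ℝ)) + chi S := by
  funext i
  by_cases h : i ∈ S <;> simp [h, chi]

lemma key_lyap (B : List ((Fin n → ℝ) × ℝ))
    (hconv : ConvexOn ℝ Set.univ (indirectUtility B))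
    (t : Fin n → ℤ) (z : Fin n → ℤ) (S S₀ : Finset (Fin n)) :
    lyapunov B t (fun i => z i + if i ∈ S ∪ S₀ then 1 else 0)
      + lyapunov B t (fun i => z i + if i ∈ S ∩ S₀ then 1 else 0) ≤
    lyapunov B t (fun i => (z i + if i ∈ S then 1 else 0) + if i ∈ S₀ then 1 else 0)
      + lyapunov B t z := by
  classical
  set zR : Fin n → ℝ := fun i => (z i : ℝ) with hzR
  have hc1 : (fun i => ((z i + if i ∈ S ∪ S₀ then 1 else 0 : ℤ) : ℝ)) = zR + chi (S ∪ S₀) :=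
    castpt z (S ∪ S₀)
  have hc2 : (fun i => ((z i + if i ∈ S ∩ S₀ then 1 else 0 : ℤ) : ℝ)) = zR + chi (S ∩ S₀) :=
    castpt z (S ∩ S₀)
  have hc3 : (fun i => (((z i + if i ∈ S then 1 else 0) + if i ∈ S₀ then 1 else 0 : ℤ) : ℝ)) =
      zR + chi (S ∪ S₀) + chi (S ∩ S₀) := by
    funext i
    simp only [Pi.add_apply, chi, Finset.mem_union, Finset.mem_inter, hzR]
    by_cases h1 : i ∈ S <;> by_cases h2 : i ∈ S₀ <;> push_cast <;> simp [h1, h2]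
  have hfkey := key B hconv zR (S ∪ S₀) (S ∩ S₀)
    (le_trans (Finset.inter_subset_left) (Finset.subset_union_left))
  have lyap_exp : ∀ w : Fin n → ℤ, lyapunov B t w =
      indirectUtility B (fun i => (w i : ℝ)) + ∑ i, (t i : ℝ) * ((w i : ℤ) : ℝ) := fun w => rfl
  rw [lyap_exp, lyap_exp, lyap_exp, lyap_exp]
  have s1 : ∑ i, (t i : ℝ) * ((z i + if i ∈ S ∪ S₀ then 1 else 0 : ℤ) : ℝ) =
      ∑ i, (t i : ℝ) * (zR + chi (S ∪ S₀)) i :=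
    Finset.sum_congr rfl fun i _ => by rw [congrFun hc1 i]
  have s2 : ∑ i, (t i : ℝ) * ((z i + if i ∈ S ∩ S₀ then 1 else 0 : ℤ) : ℝ) =
      ∑ i, (t i : ℝ) * (zR + chi (S ∩ S₀)) i :=
    Finset.sum_congr rfl fun i _ => by rw [congrFun hc2 i]
  have s3 : ∑ i, (t i : ℝ) * (((z i + if i ∈ S then 1 else 0) + if i ∈ S₀ then 1 else 0 : ℤ) : ℝ) =
      ∑ i, (t i : ℝ) * (zR + chi (S ∪ S₀) + chi (S ∩ S₀)) i :=
    Finset.sum_congr rfl fun i _ => by rw [congrFun hc3 i]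
  rw [hc1, hc2, hc3, s1, s2, s3]
  have hlin : (∑ i, (t i : ℝ) * (zR + chi (S ∪ S₀)) i) + ∑ i, (t i : ℝ) * (zR + chi (S ∩ S₀)) i =
      (∑ i, (t i : ℝ) * (zR + chi (S ∪ S₀) + chi (S ∩ S₀)) i) + ∑ i, (t i : ℝ) * zR i := by
    rw [← Finset.sum_add_distrib, ← Finset.sum_add_distrib]
    apply Finset.sum_congr rfl
    intro i _
    simp only [Pi.add_apply]
    ring
  linarith

theorem stmt18' (n : ℕ) (hn : 1 ≤ n) (B : List ((Fin n → ℝ) × ℝ))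
    (hw : ∀ bw ∈ B, bw.2 = 1 ∨ bw.2 = -1)
    (hconv : ConvexOn ℝ Set.univ (indirectUtility B))
    (t : Fin n → ℤ) (p : Fin n → ℤ) (S₀ : Finset (Fin n))
    (hmin : ∀ S : Finset (Fin n), descSlope B t p S₀ ≤ descSlope B t p S)
    (hminimal : ∀ S : Finset (Fin n),
      (∀ T : Finset (Fin n), descSlope B t p S ≤ descSlope B t p T) → S₀ ⊆ S)
    (lam : ℤ) (hlam : 1 ≤ lam)
    (heq : descSlope B t (fun i => p i + (lam - 1) * if i ∈ S₀ then 1 else 0) S₀ =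
      descSlope B t p S₀) :
    (∀ S : Finset (Fin n),
      descSlope B t (fun i => p i + (lam - 1) * if i ∈ S₀ then 1 else 0) S₀ ≤
        descSlope B t (fun i => p i + (lam - 1) * if i ∈ S₀ then 1 else 0) S) ∧
    (∀ S : Finset (Fin n),
      (∀ T : Finset (Fin n),
        descSlope B t (fun i => p i + (lam - 1) * if i ∈ S₀ then 1 else 0) S ≤
          descSlope B t (fun i => p i + (lam - 1) * if i ∈ S₀ then 1 else 0) T) →
      S₀ ⊆ S) := by
  classical
  set c := descSlope B t p S₀ with hc
  set N := (lam - 1).toNat with hN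
  have hNc : ((N : ℕ) : ℤ) = lam - 1 := Int.toNat_of_nonneg (by linarith)
  set pk : ℕ → (Fin n → ℤ) := fun k i => p i + (k : ℤ) * (if i ∈ S₀ then 1 else 0) with hpk
  have hpk0 : pk 0 = p := by funext i; simp [hpk]
  have hpkN : pk N = (fun i => p i + (lam - 1) * if i ∈ S₀ then 1 else 0) := by
    funext i; simp [hpk, hNc]
  have hpkstep : ∀ k : ℕ, (fun i => pk k i + if i ∈ S₀ then 1 else 0) = pk (k + 1) := by
    intro k; funext i; simp only [hpk]; push_cast; ring
  -- the 1-D restriction of the Lyapunov function along the direction chi S₀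
  set pR : Fin n → ℝ := fun i => (p i : ℝ) with hpR
  set K : ℝ := ∑ i, (t i : ℝ) * chi S₀ i with hK
  set C0 : ℝ := ∑ i, (t i : ℝ) * pR i with hC0
  set L : ℝ → ℝ := fun θ => indirectUtility B (pR + θ • chi S₀) + (C0 + θ * K) with hL
  have hLconv : ConvexOn ℝ Set.univ L := by
    have haff : ConvexOn ℝ Set.univ (fun θ : ℝ => C0 + θ * K) := by
      refine ⟨convex_univ, fun xx _ yy _ a b ha hb hab => le_of_eq ?_⟩
      simp only [smul_eq_mul]
      linear_combination (-C0) * hab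
    exact (convexOn_line hconv pR (chi S₀)).add haff
  have hLcast : ∀ k : ℕ, lyapunov B t (pk k) = L (k : ℝ) := by
    intro k
    have harg : (fun i => ((pk k i : ℤ) : ℝ)) = pR + (k : ℝ) • chi S₀ := by
      funext i
      simp only [hpk, Pi.add_apply, Pi.smul_apply, smul_eq_mul, chi, hpR]
      push_cast
      by_cases h : i ∈ S₀ <;> simp [h]
    have hsum : ∑ i, (t i : ℝ) * ((pk k i : ℤ) : ℝ) = C0 + (k : ℝ) * K := by
      rw [hC0, hK, Finset.mul_sum, ← Finset.sum_add_distrib]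
      apply Finset.sum_congr rfl
      intro i _
      simp only [hpk, chi, hpR]
      push_cast
      by_cases h : i ∈ S₀ <;> simp [h] <;> ring
    show indirectUtility B (fun i => ((pk k i : ℤ) : ℝ)) + ∑ i, (t i : ℝ) * ((pk k i : ℤ) : ℝ)
      = L (k : ℝ)
    rw [harg, hsum, hL]
  have hdk : ∀ m : ℕ, descSlope B t (pk m) S₀ = L ((m : ℝ) + 1) - L (m : ℝ) := by
    intro m
    show lyapunov B t (fun i => pk m i + if i ∈ S₀ then 1 else 0) - lyapunov B t (pk m) = _
    rw [hpkstep m, hLcast, hLcast]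
    push_cast
    ring_nf
  have hmono : ∀ k l : ℕ, k ≤ l →
      L ((k : ℝ) + 1) - L (k : ℝ) ≤ L ((l : ℝ) + 1) - L (l : ℝ) := by
    intro k l hkl
    have h4 := four_point hLconv (show (0:ℝ) ≤ (l : ℝ) - (k : ℝ) by
        have := (Nat.cast_le (α := ℝ)).2 hkl; linarith)
      zero_le_one (Set.mem_univ ((k : ℝ))) (Set.mem_univ _)
    rw [show (k : ℝ) + ((l : ℝ) - (k : ℝ)) = (l : ℝ) from by ring] at h4
    linarith
  have dk_eq : ∀ k : ℕ, k ≤ N → descSlope B t (pk k) S₀ = c := by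
    intro k hk
    have hd0 : descSlope B t (pk 0) S₀ = c := by rw [hpk0]
    have hdN : descSlope B t (pk N) S₀ = c := by rw [hpkN]; exact heq
    have h1 := hmono 0 k (Nat.zero_le _)
    have h2 := hmono k N hk
    rw [hdk] at hd0 hdN
    rw [hdk]
    push_cast at h1 h2 hd0 hdN ⊢
    linarith
  have main : ∀ k : ℕ, k ≤ N → ∀ S : Finset (Fin n),
      c ≤ descSlope B t (pk k) S ∧ (¬ S₀ ⊆ S → c < descSlope B t (pk k) S) := by
    intro k
    induction k with
    | zero =>
      intro _ S
      rw [hpk0]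
      refine ⟨hmin S, fun hns => ?_⟩
      rcases lt_or_eq_of_le (hmin S) with h | h
      · exact h
      · exfalso
        apply hns
        apply hminimal S
        intro T
        rw [← h]
        exact hmin T
    | succ k ih =>
      intro hk1 S
      have hkN : k ≤ N := Nat.le_of_succ_le hk1
      have ihU := ih hkN (S ∪ S₀)
      have ihV := ih hkN (S ∩ S₀)
      have hkey := key_lyap B hconv t (pk k) S S₀
      have hmid : (fun i => (pk k i + if i ∈ S then 1 else 0) + if i ∈ S₀ then 1 else 0) =
          (fun i => pk (k + 1) i + if i ∈ S then 1 else 0) := by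
        funext i; simp only [hpk]; push_cast; ring
      rw [hmid] at hkey
      have e1 : lyapunov B t (fun i => pk k i + if i ∈ S ∪ S₀ then 1 else 0) =
          descSlope B t (pk k) (S ∪ S₀) + lyapunov B t (pk k) := by
        rw [descSlope]; ring
      have e2 : lyapunov B t (fun i => pk k i + if i ∈ S ∩ S₀ then 1 else 0) =
          descSlope B t (pk k) (S ∩ S₀) + lyapunov B t (pk k) := by
        rw [descSlope]; ring
      have e3 : lyapunov B t (fun i => pk (k + 1) i + if i ∈ S then 1 else 0) =
          descSlope B t (pk (k + 1)) S + lyapunov B t (pk (k + 1)) := by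
        rw [descSlope]; ring
      have e4 : lyapunov B t (pk (k + 1)) = lyapunov B t (pk k) + c := by
        have := dk_eq k hkN
        rw [descSlope, hpkstep k] at this
        linarith
      rw [e1, e2, e3, e4] at hkey
      have hU1 := ihU.1
      have hV1 := ihV.1
      constructor
      · linarith
      · intro hns
        have hnsV : ¬ S₀ ⊆ S ∩ S₀ := fun hsub =>
          hns (le_trans hsub (Finset.inter_subset_left))
        have hV2 := ihV.2 hnsV
        linarith
  have mainN := main N (le_refl N)
  constructor
  · intro S
    have h1 := (mainN S).1
    rw [hpkN] at h1
    rw [heq]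
    exact h1
  · intro S hSmin
    by_contra hns
    have h2 := (mainN S).2 hns
    rw [hpkN] at h2
    have h3 := hSmin S₀
    rw [heq] at h3
    linarith
end St18

/-- Let `B` be a bid list with convex indirect utility function, `t ∈ ℤ^n`,
`g` the Lyapunov function and `g'(p;S) = g(p + e^S) − g(p)`. Suppose `S₀` is a minimiser of
`S ↦ g'(p;S)` contained in every minimiser, and let `λ ≥ 1` be an integer with
`g'(p + (λ−1)·e^{S₀}; S₀) = g'(p; S₀)`. Then `S₀` is a minimiser of
`S ↦ g'(p + (λ−1)·e^{S₀}; S)` contained in every minimiser of that map: `S₀` is also the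
inclusion-wise minimal steepest descent direction at `p + (λ−1)·e^{S₀}`. -/
theorem stmt18 (n : ℕ) (hn : 1 ≤ n) (B : List ((Fin n → ℝ) × ℝ))
    (hw : ∀ bw ∈ B, bw.2 = 1 ∨ bw.2 = -1)
    (hconv : ConvexOn ℝ Set.univ (indirectUtility B))
    (t : Fin n → ℤ) (p : Fin n → ℤ) (S₀ : Finset (Fin n))
    (hmin : ∀ S : Finset (Fin n), descSlope B t p S₀ ≤ descSlope B t p S)
    (hminimal : ∀ S : Finset (Fin n),
      (∀ T : Finset (Fin n), descSlope B t p S ≤ descSlope B t p T) → S₀ ⊆ S)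
    (lam : ℤ) (hlam : 1 ≤ lam)
    (heq : descSlope B t (fun i => p i + (lam - 1) * if i ∈ S₀ then 1 else 0) S₀ =
      descSlope B t p S₀) :
    (∀ S : Finset (Fin n),
      descSlope B t (fun i => p i + (lam - 1) * if i ∈ S₀ then 1 else 0) S₀ ≤
        descSlope B t (fun i => p i + (lam - 1) * if i ∈ S₀ then 1 else 0) S) ∧
    (∀ S : Finset (Fin n),
      (∀ T : Finset (Fin n),
        descSlope B t (fun i => p i + (lam - 1) * if i ∈ S₀ then 1 else 0) S ≤
          descSlope B t (fun i => p i + (lam - 1) * if i ∈ S₀ then 1 else 0) T) →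
      S₀ ⊆ S) :=
  St18.stmt18' n hn B hw hconv t p S₀ hmin hminimal lam hlam heq

end
end

section
/- Let f be a submodular set function on the subsets of {1,…,n} with values in ℝ, i.e. f(S) + f(T) ≥ f(S ∪ T) + f(S ∩ T) for all S, T. Let S be a minimiser of f, and for each v ∈ S let S_v be a minimiser of f over all subsets of {1,…,n} not containing v. Then the set S_0 := { v ∈ S : f(S_v) > f(S) } equals the intersection of all minimisers of f, and S_0 is itself a minimiser of f; in particular, S_0 is the unique inclusion-wise minimal minimiser of f. -/
open Classical in
/-- Let `f` be a real-valued submodular set function on subsets of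
`{1,…,n}`, let `S` be a minimiser of `f`, and for each `v ∈ S` let `S_v` be a minimiser of
`f` over all subsets not containing `v`. Then `S₀ := {v ∈ S : f(S_v) > f(S)}` equals the
intersection of all minimisers of `f`, and `S₀` is itself a minimiser of `f`; in particular
`S₀` is the unique inclusion-wise minimal minimiser of `f`. -/
theorem stmt19 (n : ℕ) (f : Finset (Fin n) → ℝ)
    (hsub : ∀ S T : Finset (Fin n), f (S ∪ T) + f (S ∩ T) ≤ f S + f T)
    (S : Finset (Fin n)) (hS : ∀ T, f S ≤ f T)
    (Sv : Fin n → Finset (Fin n))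
    (hSv : ∀ v ∈ S, v ∉ Sv v ∧ ∀ T : Finset (Fin n), v ∉ T → f (Sv v) ≤ f T) :
    (∀ v : Fin n, v ∈ S.filter (fun w => f S < f (Sv w)) ↔
      ∀ T : Finset (Fin n), (∀ T', f T ≤ f T') → v ∈ T) ∧
    (∀ T : Finset (Fin n), f (S.filter (fun w => f S < f (Sv w))) ≤ f T) := by
  classical
  set S₀ := S.filter (fun w => f S < f (Sv w)) with hS₀
  -- Part 1 forward: elements of S₀ lie in every minimiser
  have fwd : ∀ v ∈ S₀, ∀ T : Finset (Fin n), (∀ T', f T ≤ f T') → v ∈ T := by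
    intro v hv T hT
    rw [Finset.mem_filter] at hv
    by_contra hvT
    have h1 := (hSv v hv.1).2 T hvT
    have h2 := hT S
    linarith [hv.2]
  -- Part 1 backward
  have bwd : ∀ v : Fin n, (∀ T : Finset (Fin n), (∀ T', f T ≤ f T') → v ∈ T) → v ∈ S₀ := by
    intro v h
    have hvS : v ∈ S := h S hS
    rw [Finset.mem_filter]
    refine ⟨hvS, ?_⟩
    by_contra hlt
    push_neg at hlt
    have hmin : ∀ T', f (Sv v) ≤ f T' := fun T' => le_trans hlt (hS T')
    exact (hSv v hvS).1 (h (Sv v) hmin)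
  -- intersection of two minimisers is a minimiser
  have inter_min : ∀ A B : Finset (Fin n), (∀ T, f A ≤ f T) → (∀ T, f B ≤ f T) →
      ∀ T, f (A ∩ B) ≤ f T := by
    intro A B hA hB T
    have h1 := hsub A B
    have h2 := hA (A ∪ B)
    have h3 := hB S
    have h4 := hA S
    have h5 := hS T
    have h6 := hS (A ∩ B)
    linarith
  -- intersection over a family of the Sv's (for v ∈ S \ S₀), together with S, is a minimiser
  have hSvmin : ∀ a ∈ S \ S₀, ∀ T, f (Sv a) ≤ f T := by
    intro a ha T
    rw [Finset.mem_sdiff, hS₀, Finset.mem_filter] at ha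
    have hle : f (Sv a) ≤ f S := by
      by_contra hc
      push_neg at hc
      exact ha.2 ⟨ha.1, hc⟩
    exact le_trans hle (hS T)
  have key : ∀ F : Finset (Fin n), F ⊆ S \ S₀ → ∀ T, f (S ∩ F.inf Sv) ≤ f T := by
    intro F
    induction F using Finset.induction_on with
    | empty =>
      intro _ T
      simpa using hS T
    | insert a F' hx ih =>
      intro hsub' T
      have ha : a ∈ S \ S₀ := hsub' (Finset.mem_insert_self a F')
      have hF' : F' ⊆ S \ S₀ := fun x hxF => hsub' (Finset.mem_insert_of_mem hxF)
      have : S ∩ (insert a F').inf Sv = Sv a ∩ (S ∩ F'.inf Sv) := by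
        rw [Finset.inf_insert]
        ext x
        simp [Finset.mem_inter, Finset.mem_inf]
        tauto
      rw [this]
      exact inter_min _ _ (hSvmin a ha) (ih hF') T
  -- S₀ equals S ∩ ⋂_{a ∈ S \ S₀} Sv a
  have hEq : S₀ = S ∩ (S \ S₀).inf Sv := by
    ext v
    constructor
    · intro hv
      rw [Finset.mem_inter, Finset.mem_inf]
      refine ⟨(Finset.mem_filter.mp hv).1, ?_⟩
      intro a ha
      exact fwd v hv (Sv a) (hSvmin a ha)
    · intro hv
      rw [Finset.mem_inter, Finset.mem_inf] at hv
      by_contra hv0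
      have hvsd : v ∈ S \ S₀ := Finset.mem_sdiff.mpr ⟨hv.1, hv0⟩
      exact (hSv v hv.1).1 (hv.2 v hvsd)
  refine ⟨fun v => ⟨fwd v, bwd v⟩, ?_⟩
  intro T
  rw [hEq]
  exact key _ (le_refl _) T
end
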